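/- Let α = (α_0, ..., α_ℓ) be a filter of order p ≥ 2 and let H ∈ (0,1). Then the series ∑_{k=1}^{∞} (∑_{q,r=0}^{ℓ} α_q α_r |k+q-r|^{2H})^2 converges. -/

import Mathlib

open Finset Set



lemma iterDW_rpow {a b y : ℝ} (ha : 0 < a) (hab : a < b) (n : ℕ) :
    ∀ x ∈ Icc a b, iteratedDerivWithin n (fun t : ℝ => t ^ y) (Icc a b) x
      = (∏ i ∈ range n, (y - i)) * x ^ (y - n) := by
  induction n with
  | zero => intro x hx; simp [iteratedDerivWithin_zero]
  | succ n ih =>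
    intro x hx
    have hu : UniqueDiffOn ℝ (Icc a b) := uniqueDiffOn_Icc hab
    rw [iteratedDerivWithin_succ]
    have hx0 : (0:ℝ) < x := lt_of_lt_of_le ha hx.1
    have hcong : derivWithin (iteratedDerivWithin n (fun t : ℝ => t ^ y) (Icc a b)) (Icc a b) x
        = derivWithin (fun t : ℝ => (∏ i ∈ range n, (y - i)) * t ^ (y - n)) (Icc a b) x :=
      derivWithin_congr (fun t ht => ih t ht) (ih x hx)
    rw [hcong]
    have hd : HasDerivAt (fun t : ℝ => (∏ i ∈ range n, (y - i)) * t ^ (y - n))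
        ((∏ i ∈ range n, (y - i)) * ((y - n) * x ^ (y - n - 1))) x :=
      (Real.hasDerivAt_rpow_const (Or.inl hx0.ne')).const_mul _
    rw [(hd.hasDerivWithinAt).derivWithin (hu x hx)]
    rw [Finset.prod_range_succ]
    have : y - ((n:ℕ)+1 : ℕ) = y - (n:ℝ) - 1 := by push_cast; ring
    rw [this]; ring


lemma momR {ℓ p : ℕ} {α : ℕ → ℝ}
    (hzero : ∀ r < p, ∑ q ∈ Finset.range (ℓ + 1), α q * (q : ℝ) ^ r = 0)
    {j : ℕ} (hj : j < p) (c : ℝ) :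
    ∑ r ∈ Finset.range (ℓ + 1), α r * (c - (r : ℝ)) ^ j = 0 := by
  have hexp : ∀ r : ℕ, α r * (c - (r : ℝ)) ^ j
      = ∑ i ∈ range (j + 1), (c ^ i * (-1) ^ (j - i) * (j.choose i)) * (α r * (r : ℝ) ^ (j - i)) := by
    intro r
    rw [sub_eq_add_neg, add_pow, Finset.mul_sum]
    refine Finset.sum_congr rfl fun i _ => ?_
    rw [neg_pow]
    ring
  calc ∑ r ∈ Finset.range (ℓ + 1), α r * (c - (r : ℝ)) ^ j
      = ∑ i ∈ range (j + 1), (c ^ i * (-1) ^ (j - i) * (j.choose i)) *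
          ∑ r ∈ Finset.range (ℓ + 1), α r * (r : ℝ) ^ (j - i) := by
        simp_rw [hexp, Finset.mul_sum]
        rw [Finset.sum_comm]
    _ = 0 := by
        refine Finset.sum_eq_zero fun i _ => ?_
        rw [hzero (j - i) (lt_of_le_of_lt (Nat.sub_le j i) hj), mul_zero]

lemma momQR {ℓ p : ℕ} {α : ℕ → ℝ}
    (hzero : ∀ r < p, ∑ q ∈ Finset.range (ℓ + 1), α q * (q : ℝ) ^ r = 0)
    {j : ℕ} (hj : j < 2 * p) (c : ℝ) :
    ∑ q ∈ Finset.range (ℓ + 1), ∑ r ∈ Finset.range (ℓ + 1),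
      α q * α r * ((q : ℝ) - (r : ℝ) + c) ^ j = 0 := by
  have hexp : ∀ q r : ℕ, α q * α r * ((q : ℝ) - (r : ℝ) + c) ^ j
      = ∑ i ∈ range (j + 1),
          (α q * (q : ℝ) ^ i) * (α r * (c - (r : ℝ)) ^ (j - i)) * (j.choose i) := by
    intro q r
    have h1 : (q : ℝ) - (r : ℝ) + c = (q : ℝ) + (c - (r : ℝ)) := by ring
    rw [h1, add_pow, Finset.mul_sum]
    refine Finset.sum_congr rfl fun i _ => by ring
  calc ∑ q ∈ Finset.range (ℓ + 1), ∑ r ∈ Finset.range (ℓ + 1),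
        α q * α r * ((q : ℝ) - (r : ℝ) + c) ^ j
      = ∑ i ∈ range (j + 1), ∑ q ∈ Finset.range (ℓ + 1), ∑ r ∈ Finset.range (ℓ + 1),
          (α q * (q : ℝ) ^ i) * (α r * (c - (r : ℝ)) ^ (j - i)) * (j.choose i) := by
        simp_rw [hexp]
        rw [show (∑ q ∈ Finset.range (ℓ + 1), ∑ r ∈ Finset.range (ℓ + 1), ∑ i ∈ range (j+1),
          (α q * (q : ℝ) ^ i) * (α r * (c - (r : ℝ)) ^ (j - i)) * (j.choose i))
          = ∑ q ∈ Finset.range (ℓ + 1), ∑ i ∈ range (j+1), ∑ r ∈ Finset.range (ℓ + 1),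
          (α q * (q : ℝ) ^ i) * (α r * (c - (r : ℝ)) ^ (j - i)) * (j.choose i) from
          Finset.sum_congr rfl fun q _ => Finset.sum_comm]
        exact Finset.sum_comm
    _ = 0 := by
        refine Finset.sum_eq_zero fun i _ => ?_
        by_cases hi : i < p
        · have hq := hzero i hi
          calc (∑ q ∈ Finset.range (ℓ + 1), ∑ r ∈ Finset.range (ℓ + 1),
              (α q * (q : ℝ) ^ i) * (α r * (c - (r : ℝ)) ^ (j - i)) * (j.choose i))
              = ∑ q ∈ Finset.range (ℓ + 1), (α q * (q : ℝ) ^ i) *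
                ∑ r ∈ Finset.range (ℓ + 1), (α r * (c - (r : ℝ)) ^ (j - i)) * (j.choose i) := by
                refine Finset.sum_congr rfl fun q _ => ?_
                rw [Finset.mul_sum]
                exact Finset.sum_congr rfl fun r _ => by ring
            _ = (∑ q ∈ Finset.range (ℓ + 1), α q * (q : ℝ) ^ i) *
                ∑ r ∈ Finset.range (ℓ + 1), (α r * (c - (r : ℝ)) ^ (j - i)) * (j.choose i) := by
                rw [Finset.sum_mul]
            _ = 0 := by rw [hq, zero_mul]
        · have hji : j - i < p := by omega
          refine Finset.sum_eq_zero fun q _ => ?_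
          calc (∑ r ∈ Finset.range (ℓ + 1),
              (α q * (q : ℝ) ^ i) * (α r * (c - (r : ℝ)) ^ (j - i)) * (j.choose i))
              = ((α q * (q : ℝ) ^ i) * (j.choose i)) *
                ∑ r ∈ Finset.range (ℓ + 1), α r * (c - (r : ℝ)) ^ (j - i) := by
                rw [Finset.mul_sum]
                exact Finset.sum_congr rfl fun r _ => by ring
            _ = 0 := by rw [momR hzero hji c, mul_zero]


set_option maxHeartbeats 1000000 in
/-- For a filter `α` of order `p ≥ 2` and `H ∈ (0,1)`, the series
`∑_{k=1}^∞ (∑_{q,r} α_q α_r |k+q-r|^{2H})²` converges. -/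
theorem filter_series_summable (ℓ p : ℕ) (hp : 2 ≤ p) (α : ℕ → ℝ)
    (hzero : ∀ r < p, ∑ q ∈ Finset.range (ℓ + 1), α q * (q : ℝ) ^ r = 0)
    (hne : ∑ q ∈ Finset.range (ℓ + 1), α q * (q : ℝ) ^ p ≠ 0)
    (H : ℝ) (hH : H ∈ Set.Ioo (0 : ℝ) 1) :
    Summable (fun k : ℕ =>
      (∑ q ∈ Finset.range (ℓ + 1), ∑ r ∈ Finset.range (ℓ + 1),
        α q * α r * |((k : ℝ) + 1) + (q : ℝ) - (r : ℝ)| ^ (2 * H)) ^ 2) := by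
  -- degenerate case ℓ = 0
  rcases Nat.eq_zero_or_pos ℓ with hℓ0 | hℓ1
  · exfalso
    apply hne
    subst hℓ0
    simp [Finset.sum_range_one, zero_pow (by omega : p ≠ 0)]
  -- abbreviations
  set F : ℝ → ℝ := fun t => t ^ (2 * H) with hF
  set n' : ℕ := 2 * p - 1 with hn'def
  have hn' : n' + 1 = 2 * p := by omega
  set e : ℝ := 2 * H - 2 * (p : ℝ) with he
  have he0 : e ≤ 0 := by
    have := hH.2
    have hp2 : (2 : ℝ) ≤ (p : ℝ) := by exact_mod_cast hp
    rw [he]; nlinarith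
  set P : ℝ := |∏ i ∈ range (n' + 1), (2 * H - (i : ℝ))| with hP
  set A : ℝ := ∑ q ∈ Finset.range (ℓ + 1), ∑ r ∈ Finset.range (ℓ + 1), |α q| * |α r| with hA
  have hA0 : 0 ≤ A :=
    Finset.sum_nonneg fun q _ => Finset.sum_nonneg fun r _ =>
      mul_nonneg (abs_nonneg _) (abs_nonneg _)
  set D : ℝ := (2 * (ℓ : ℝ)) ^ (n' + 1) / (n'.factorial : ℝ) with hD
  have hD0 : 0 ≤ D := div_nonneg (pow_nonneg (by positivity) _) (by positivity)
  set C₀ : ℝ := A * (P * (2 : ℝ) ^ (-e)) * D with hC₀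
  set S : ℕ → ℝ := fun k => ∑ q ∈ Finset.range (ℓ + 1), ∑ r ∈ Finset.range (ℓ + 1),
      α q * α r * |((k : ℝ) + 1) + (q : ℝ) - (r : ℝ)| ^ (2 * H) with hS
  -- the key bound
  have key : ∀ k : ℕ, 2 * ℓ ≤ k → |S k| ≤ C₀ * ((k : ℝ) + 1) ^ e := by
    intro k hk
    set K : ℝ := (k : ℝ) + 1 with hK
    have hKℓ : 2 * (ℓ : ℝ) + 1 ≤ K := by
      have : (2 * (ℓ:ℝ)) ≤ (k:ℝ) := by exact_mod_cast hk
      rw [hK]; linarith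
    have hK1 : (1 : ℝ) ≤ K := by
      have : (0:ℝ) ≤ (ℓ:ℝ) := Nat.cast_nonneg _
      linarith
    have hK0 : (0 : ℝ) < K := by linarith
    set a : ℝ := K - ℓ with ha'
    set b : ℝ := K + ℓ with hb'
    have hℓ1' : (1 : ℝ) ≤ (ℓ : ℝ) := by exact_mod_cast hℓ1
    have ha : 0 < a := by rw [ha']; linarith
    have hab : a < b := by rw [ha', hb']; linarith
    have haK : K / 2 ≤ a := by rw [ha']; linarith
    -- smoothness
    have hf : ContDiffOn ℝ (n' + 1 : ℕ) F (Icc a b) := fun x hx =>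
      (Real.contDiffAt_rpow_const_of_ne (ne_of_gt (lt_of_lt_of_le ha hx.1))).contDiffWithinAt
    -- bound on the iterated derivative
    set Cb : ℝ := P * a ^ e with hCb
    have hCb0 : 0 ≤ Cb := mul_nonneg (abs_nonneg _) (Real.rpow_nonneg ha.le _)
    have hcast : ((n' + 1 : ℕ) : ℝ) = 2 * (p : ℝ) := by rw [hn']; push_cast; ring
    have hC : ∀ y ∈ Icc a b, ‖iteratedDerivWithin (n' + 1) F (Icc a b) y‖ ≤ Cb := by
      intro y hy
      rw [iterDW_rpow ha hab (n' + 1) y hy, Real.norm_eq_abs, abs_mul,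
        abs_of_pos (Real.rpow_pos_of_pos (lt_of_lt_of_le ha hy.1) _)]
      rw [hcast, ← he]
      exact mul_le_mul_of_nonneg_left
        (Real.rpow_le_rpow_of_nonpos ha hy.1 he0) (abs_nonneg _)
    -- Taylor remainder bound for each term
    have htay : ∀ q ∈ Finset.range (ℓ + 1), ∀ r ∈ Finset.range (ℓ + 1),
        |F (K + q - r) - taylorWithinEval F n' (Icc a b) a (K + q - r)| ≤ Cb * D := by
      intro q hq r hr
      have hq' : (q : ℝ) ≤ ℓ := by exact_mod_cast Nat.lt_succ_iff.mp (Finset.mem_range.mp hq)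
      have hr' : (r : ℝ) ≤ ℓ := by exact_mod_cast Nat.lt_succ_iff.mp (Finset.mem_range.mp hr)
      have hq0 : (0:ℝ) ≤ q := Nat.cast_nonneg _
      have hr0 : (0:ℝ) ≤ r := Nat.cast_nonneg _
      have hx : K + q - r ∈ Icc a b := by
        constructor
        · rw [ha']; linarith
        · rw [hb']; linarith
      have := taylor_mean_remainder_bound hab.le hf hx hC
      rw [Real.norm_eq_abs] at this
      refine this.trans ?_
      have hxa0 : (0:ℝ) ≤ K + q - r - a := by rw [ha']; linarith
      have hxa2 : K + (q:ℝ) - r - a ≤ 2 * (ℓ:ℝ) := by rw [ha']; linarith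
      have hpow : (K + (q:ℝ) - r - a) ^ (n' + 1) ≤ (2 * (ℓ:ℝ)) ^ (n' + 1) :=
        pow_le_pow_left₀ hxa0 hxa2 _
      calc Cb * (K + (q:ℝ) - r - a) ^ (n' + 1) / (n'.factorial : ℝ)
          ≤ Cb * (2 * (ℓ:ℝ)) ^ (n' + 1) / (n'.factorial : ℝ) :=
            (div_le_div_iff_of_pos_right (by positivity)).mpr (mul_le_mul_of_nonneg_left hpow hCb0)
        _ = Cb * D := by rw [hD, mul_div_assoc]
    -- the Taylor polynomial part sums to zero
    have hT : ∑ q ∈ Finset.range (ℓ + 1), ∑ r ∈ Finset.range (ℓ + 1),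
        α q * α r * taylorWithinEval F n' (Icc a b) a (K + q - r) = 0 := by
      have hstep : ∀ q ∈ Finset.range (ℓ + 1), ∀ r ∈ Finset.range (ℓ + 1),
          α q * α r * taylorWithinEval F n' (Icc a b) a (K + q - r)
          = ∑ i ∈ range (n' + 1), ((i.factorial : ℝ)⁻¹ * iteratedDerivWithin i F (Icc a b) a) *
              (α q * α r * ((q : ℝ) - (r : ℝ) + (ℓ : ℝ)) ^ i) := by
        intro q _ r _
        rw [taylor_within_apply, Finset.mul_sum]
        refine Finset.sum_congr rfl fun i _ => ?_
        have hxa : K + (q:ℝ) - r - a = (q : ℝ) - (r : ℝ) + (ℓ : ℝ) := by rw [ha']; ring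
        rw [smul_eq_mul, hxa]
        ring
      calc ∑ q ∈ Finset.range (ℓ + 1), ∑ r ∈ Finset.range (ℓ + 1),
            α q * α r * taylorWithinEval F n' (Icc a b) a (K + q - r)
          = ∑ q ∈ Finset.range (ℓ + 1), ∑ r ∈ Finset.range (ℓ + 1),
            ∑ i ∈ range (n' + 1), ((i.factorial : ℝ)⁻¹ * iteratedDerivWithin i F (Icc a b) a) *
              (α q * α r * ((q : ℝ) - (r : ℝ) + (ℓ : ℝ)) ^ i) :=
            Finset.sum_congr rfl fun q hq => Finset.sum_congr rfl fun r hr => hstep q hq r hr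
        _ = ∑ i ∈ range (n' + 1), ∑ q ∈ Finset.range (ℓ + 1), ∑ r ∈ Finset.range (ℓ + 1),
            ((i.factorial : ℝ)⁻¹ * iteratedDerivWithin i F (Icc a b) a) *
              (α q * α r * ((q : ℝ) - (r : ℝ) + (ℓ : ℝ)) ^ i) := by
            rw [show (∑ q ∈ Finset.range (ℓ + 1), ∑ r ∈ Finset.range (ℓ + 1),
              ∑ i ∈ range (n' + 1), ((i.factorial : ℝ)⁻¹ * iteratedDerivWithin i F (Icc a b) a) *
                (α q * α r * ((q : ℝ) - (r : ℝ) + (ℓ : ℝ)) ^ i))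
              = ∑ q ∈ Finset.range (ℓ + 1), ∑ i ∈ range (n' + 1),
                ∑ r ∈ Finset.range (ℓ + 1),
                ((i.factorial : ℝ)⁻¹ * iteratedDerivWithin i F (Icc a b) a) *
                (α q * α r * ((q : ℝ) - (r : ℝ) + (ℓ : ℝ)) ^ i) from
              Finset.sum_congr rfl fun q _ => Finset.sum_comm]
            exact Finset.sum_comm
        _ = 0 := by
            refine Finset.sum_eq_zero fun i hi => ?_
            have hi2p : i < 2 * p := by
              have := Finset.mem_range.mp hi; omega
            have h0 := momQR hzero hi2p ((ℓ : ℝ))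
            calc (∑ q ∈ Finset.range (ℓ + 1), ∑ r ∈ Finset.range (ℓ + 1),
                ((i.factorial : ℝ)⁻¹ * iteratedDerivWithin i F (Icc a b) a) *
                (α q * α r * ((q : ℝ) - (r : ℝ) + (ℓ : ℝ)) ^ i))
                = ((i.factorial : ℝ)⁻¹ * iteratedDerivWithin i F (Icc a b) a) *
                  ∑ q ∈ Finset.range (ℓ + 1), ∑ r ∈ Finset.range (ℓ + 1),
                  (α q * α r * ((q : ℝ) - (r : ℝ) + (ℓ : ℝ)) ^ i) := by
                  rw [Finset.mul_sum]
                  exact Finset.sum_congr rfl fun q _ => by rw [Finset.mul_sum]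
              _ = 0 := by rw [h0, mul_zero]
    -- rewrite S k using F
    have hSk : S k = ∑ q ∈ Finset.range (ℓ + 1), ∑ r ∈ Finset.range (ℓ + 1),
        α q * α r * (F (K + q - r) - taylorWithinEval F n' (Icc a b) a (K + q - r)) := by
      have habs : ∀ q ∈ Finset.range (ℓ + 1), ∀ r ∈ Finset.range (ℓ + 1),
          α q * α r * |K + (q:ℝ) - r| ^ (2 * H) = α q * α r * F (K + q - r) := by
        intro q hq r hr
        have hr' : (r : ℝ) ≤ ℓ := by exact_mod_cast Nat.lt_succ_iff.mp (Finset.mem_range.mp hr)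
        have hq0 : (0:ℝ) ≤ q := Nat.cast_nonneg _
        have hpos : 0 < K + (q:ℝ) - r := by
          have : a ≤ K + (q:ℝ) - r := by rw [ha']; linarith
          linarith
        rw [hF, abs_of_pos hpos]
      calc S k = ∑ q ∈ Finset.range (ℓ + 1), ∑ r ∈ Finset.range (ℓ + 1),
            α q * α r * F (K + q - r) := by
            rw [hS]
            exact Finset.sum_congr rfl fun q hq => Finset.sum_congr rfl fun r hr =>
              habs q hq r hr
        _ = _ := by
            rw [← sub_zero (∑ q ∈ Finset.range (ℓ + 1), ∑ r ∈ Finset.range (ℓ + 1),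
              α q * α r * F (K + q - r)), ← hT, ← Finset.sum_sub_distrib]
            refine Finset.sum_congr rfl fun q _ => ?_
            rw [← Finset.sum_sub_distrib]
            exact Finset.sum_congr rfl fun r _ => by ring
    -- bound |S k|
    have hbound : |S k| ≤ A * (Cb * D) := by
      rw [hSk]
      refine (Finset.abs_sum_le_sum_abs _ _).trans ?_
      rw [hA, Finset.sum_mul]
      refine Finset.sum_le_sum fun q hq => ?_
      refine (Finset.abs_sum_le_sum_abs _ _).trans ?_
      rw [Finset.sum_mul]
      refine Finset.sum_le_sum fun r hr => ?_
      rw [abs_mul, abs_mul, mul_assoc, mul_assoc]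
      exact mul_le_mul_of_nonneg_left (mul_le_mul_of_nonneg_left
        (htay q hq r hr) (abs_nonneg _)) (abs_nonneg _)
    -- conclude
    refine hbound.trans ?_
    rw [hC₀, hCb]
    have haKe : a ^ e ≤ (2 : ℝ) ^ (-e) * K ^ e := by
      have h2 : a ^ e ≤ (K / 2) ^ e :=
        Real.rpow_le_rpow_of_nonpos (by linarith) haK he0
      have h1 : (K / 2) ^ e = (2:ℝ) ^ (-e) * K ^ e := by
        rw [Real.div_rpow hK0.le (by norm_num : (0:ℝ) ≤ 2),
          Real.rpow_neg (by norm_num : (0:ℝ) ≤ 2)]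
        ring
      calc a ^ e ≤ (K / 2) ^ e := h2
        _ = (2:ℝ) ^ (-e) * K ^ e := h1
    calc A * (P * a ^ e * D) ≤ A * (P * ((2 : ℝ) ^ (-e) * K ^ e) * D) := by
          gcongr
      _ = A * (P * (2 : ℝ) ^ (-e)) * D * K ^ e := by ring
  -- summability via comparison
  have hsum2 : Summable (fun k : ℕ => C₀ ^ 2 * ((k : ℝ) + 1) ^ (-2 : ℝ)) := by
    have h1 : Summable (fun n : ℕ => ((n : ℝ)) ^ (-2 : ℝ)) :=
      Real.summable_nat_rpow.mpr (by norm_num)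
    have h2 : Summable (fun n : ℕ => (((n + 1 : ℕ) : ℝ)) ^ (-2 : ℝ)) :=
      (summable_nat_add_iff 1).mpr h1
    have h3 : Summable (fun n : ℕ => ((n : ℝ) + 1) ^ (-2 : ℝ)) := by
      refine h2.congr fun n => ?_
      push_cast
      ring_nf
    exact h3.mul_left _
  rw [hS] at key
  apply (summable_nat_add_iff (2 * ℓ)).mp
  refine Summable.of_nonneg_of_le (fun n => sq_nonneg _)
    (fun n => ?_) ((summable_nat_add_iff (2 * ℓ)).mpr hsum2)
  have hkey := key (n + 2 * ℓ) (by omega)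
  set T := ∑ q ∈ Finset.range (ℓ + 1), ∑ r ∈ Finset.range (ℓ + 1),
      α q * α r * |(((n + 2 * ℓ : ℕ) : ℝ) + 1) + (q : ℝ) - (r : ℝ)| ^ (2 * H) with hTdef
  have hK1 : (1 : ℝ) ≤ ((n + 2 * ℓ : ℕ) : ℝ) + 1 := by
    have : (0:ℝ) ≤ ((n + 2 * ℓ : ℕ) : ℝ) := Nat.cast_nonneg _
    linarith
  have hK0 : (0 : ℝ) < ((n + 2 * ℓ : ℕ) : ℝ) + 1 := by positivity
  have hC₀0 : 0 ≤ C₀ * (((n + 2 * ℓ : ℕ) : ℝ) + 1) ^ e := (abs_nonneg _).trans hkey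
  calc T ^ 2 = |T| ^ 2 := (sq_abs T).symm
    _ ≤ (C₀ * (((n + 2 * ℓ : ℕ) : ℝ) + 1) ^ e) ^ 2 :=
        pow_le_pow_left₀ (abs_nonneg _) hkey 2
    _ = C₀ ^ 2 * ((((n + 2 * ℓ : ℕ) : ℝ) + 1) ^ e) ^ 2 := by ring
    _ ≤ C₀ ^ 2 * (((n + 2 * ℓ : ℕ) : ℝ) + 1) ^ (-2 : ℝ) := by
        gcongr C₀ ^ 2 * ?_
        have h1 : ((((n + 2 * ℓ : ℕ) : ℝ) + 1) ^ e) ^ 2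
            = (((n + 2 * ℓ : ℕ) : ℝ) + 1) ^ (2 * e) := by
          rw [← Real.rpow_natCast ((((n + 2 * ℓ : ℕ) : ℝ) + 1) ^ e) 2,
            ← Real.rpow_mul hK0.le]
          norm_num
          ring_nf
        rw [h1]
        apply Real.rpow_le_rpow_of_exponent_le hK1
        have hp2 : (2 : ℝ) ≤ (p : ℝ) := by exact_mod_cast hp
        have := hH.2
        rw [he]
        nlinarith
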